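/- Let r ≥ 3, s ≥ 3 and t be integers such that T(r,s,t) admits a proper 3-coloring. Then every proper 4-coloring f of T(r,s,t) satisfies deg(f) ≡ 0 (mod 6). -/

import Mathlib

/-- The subgroup Λ of ℤ² generated by (r,0) and (−t,s). -/
def torusLattice (r s t : ℤ) : AddSubgroup (ℤ × ℤ) :=
  AddSubgroup.closure {(r, 0), (-t, s)}

/-- The vertex set ℤ²/Λ of the triangulation T(r,s,t). -/
abbrev TorusV (r s t : ℤ) := (ℤ × ℤ) ⧸ torusLattice r s t

/-- The quotient map ℤ² → ℤ²/Λ. -/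
def tmk (r s t : ℤ) : (ℤ × ℤ) →+ TorusV r s t := QuotientAddGroup.mk' (torusLattice r s t)

/-- The six neighbour displacement vectors. -/
def hexDirs : Finset (ℤ × ℤ) := {(1,0), (-1,0), (0,1), (0,-1), (1,1), (-1,-1)}

/-- The triangulation T(r,s,t) of the torus: two distinct vertices are adjacent
iff their difference is the image of one of the six displacement vectors. -/
def TriT (r s t : ℤ) : SimpleGraph (TorusV r s t) where
  Adj u v := u ≠ v ∧ ∃ d ∈ hexDirs, v - u = tmk r s t d
  symm := ⟨by
    rintro u v ⟨hne, d, hd, hsub⟩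
    refine ⟨hne.symm, -d, ?_, ?_⟩
    · fin_cases hd <;> decide
    · rw [show u - v = -(v - u) from (neg_sub v u).symm, hsub, ← map_neg]⟩
  loopless := ⟨fun u h => h.1 rfl⟩

/-- A proper `q`-coloring of a simple graph. -/
def IsProperColoring {V : Type*} (G : SimpleGraph V) {q : ℕ} (f : V → Fin q) : Prop :=
  ∀ ⦃u v : V⦄, G.Adj u v → f u ≠ f v

/-- The sign contribution of a face whose ordered vertex colors are `(a,b,c)`:
`+1` for the cyclic orientations of `(0,1,2)`, `-1` for those of `(0,2,1)`,
`0` otherwise. -/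
def faceSign (a b c : Fin 4) : ℤ :=
  if (a, b, c) = ((0 : Fin 4), (1 : Fin 4), (2 : Fin 4)) ∨ (a, b, c) = (1, 2, 0)
      ∨ (a, b, c) = (2, 0, 1) then 1
  else if (a, b, c) = ((0 : Fin 4), (2 : Fin 4), (1 : Fin 4)) ∨ (a, b, c) = (2, 1, 0)
      ∨ (a, b, c) = (1, 0, 2) then -1
  else 0

/-- The degree of a 4-coloring of T(r,s,t): the sum over all triangular faces
(each face counted exactly once, via the canonical vertex representatives in
the box [0,r)×[0,s)) of the signed contributions of the up-face and the
down-face based at each vertex. -/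
def degT (r s t : ℤ) (f : TorusV r s t → Fin 4) : ℤ :=
  ∑ i ∈ Finset.range r.toNat, ∑ j ∈ Finset.range s.toNat,
    (faceSign (f (tmk r s t ((i : ℤ), (j : ℤ))))
              (f (tmk r s t ((i : ℤ) + 1, (j : ℤ) + 1)))
              (f (tmk r s t ((i : ℤ), (j : ℤ) + 1)))
      + faceSign (f (tmk r s t ((i : ℤ), (j : ℤ))))
                 (f (tmk r s t ((i : ℤ) + 1, (j : ℤ))))
                 (f (tmk r s t ((i : ℤ) + 1, (j : ℤ) + 1))))

/-! ### Auxiliary material for the proof -/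

/-- Edge-weight table on the 12 combined colors, as a 12×12 antisymmetric matrix
over `ZMod 6`. -/
def Gt : Fin 12 → Fin 12 → ZMod 6 :=
  ![![0, 0, 0, 0, 0, 0, 0, 1, 0, 1, 1, 0],
   ![0, 0, 0, 0, 0, 0, 0, 5, 5, 0, 5, 0],
   ![0, 0, 0, 0, 0, 0, 0, 1, 1, 1, 0, 0],
   ![0, 0, 0, 0, 2, 4, 4, 0, 4, 4, 0, 0],
   ![0, 0, 0, 4, 0, 0, 0, 0, 0, 2, 4, 0],
   ![0, 0, 0, 2, 0, 0, 0, 0, 0, 0, 2, 0],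
   ![0, 0, 0, 2, 0, 0, 0, 0, 0, 0, 0, 0],
   ![5, 1, 5, 0, 0, 0, 0, 0, 0, 0, 0, 0],
   ![0, 1, 5, 2, 0, 0, 0, 0, 0, 0, 0, 0],
   ![5, 0, 5, 2, 4, 0, 0, 0, 0, 0, 0, 0],
   ![5, 1, 0, 0, 2, 4, 0, 0, 0, 0, 0, 0],
   ![0, 0, 0, 0, 0, 0, 0, 0, 0, 0, 0, 0]]

/-- Edge weight attached to an ordered pair of combined colors. -/
def Gf (x y : Fin 3 × Fin 4) : ZMod 6 :=
  Gt ⟨x.1.val * 4 + x.2.val, by omega⟩ ⟨y.1.val * 4 + y.2.val, by omega⟩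

lemma Gskew : ∀ x y : Fin 3 × Fin 4, Gf x y = - Gf y x := by decide

lemma Gface : ∀ (c1 c2 c3 : Fin 3) (a b d : Fin 4), c1 ≠ c2 → c2 ≠ c3 → c1 ≠ c3 →
    a ≠ b → b ≠ d → a ≠ d →
    ((faceSign a b d : ℤ) : ZMod 6) = Gf (c1,a) (c2,b) + Gf (c2,b) (c3,d) + Gf (c3,d) (c1,a) := by
  decide

section lat
variable {r s t : ℤ}

lemma lat_snd {p : ℤ × ℤ} (hp : p ∈ torusLattice r s t) : s ∣ p.2 := by
  have h : torusLattice r s t ≤ (AddSubgroup.zmultiples s).comap (AddMonoidHom.snd ℤ ℤ) := by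
    rw [torusLattice, AddSubgroup.closure_le]
    rintro x (rfl | rfl)
    · exact AddSubgroup.mem_comap.2 (by simp only [AddMonoidHom.coe_snd]; exact zero_mem _)
    · exact AddSubgroup.mem_comap.2 (by simpa using AddSubgroup.mem_zmultiples s)
  have := h hp
  rw [AddSubgroup.mem_comap] at this
  simpa using (Int.mem_zmultiples_iff).1 this

def phiL (s t : ℤ) : (ℤ × ℤ) →+ ℤ :=
  AddMonoidHom.mk' (fun p => p.1 * s + p.2 * t) (by intro a b; simp [Prod.fst_add, Prod.snd_add]; ring)

lemma lat_phi {p : ℤ × ℤ} (hp : p ∈ torusLattice r s t) : (r * s) ∣ (p.1 * s + p.2 * t) := by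
  have h : torusLattice r s t ≤ (AddSubgroup.zmultiples (r*s)).comap (phiL s t) := by
    rw [torusLattice, AddSubgroup.closure_le]
    rintro x (rfl | rfl)
    · exact AddSubgroup.mem_comap.2 (by simpa [phiL] using AddSubgroup.mem_zmultiples (r*s))
    · refine AddSubgroup.mem_comap.2 ?_
      have h0 : phiL s t (-t, s) = 0 := by simp [phiL]; ring
      rw [h0]; exact zero_mem _
  have := h hp
  rw [AddSubgroup.mem_comap] at this
  simpa [phiL] using (Int.mem_zmultiples_iff).1 this

lemma nm10 (hr : 3 ≤ r) (hs : 3 ≤ s) : ((1:ℤ), (0:ℤ)) ∉ torusLattice r s t := by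
  intro h
  have := lat_phi h
  simp at this
  have h1 : r * s ≤ s := Int.le_of_dvd (by omega) this
  nlinarith

lemma nm01 (hs : 3 ≤ s) : ((0:ℤ), (1:ℤ)) ∉ torusLattice r s t := by
  intro h
  have h1 : s ∣ 1 := by simpa using lat_snd h
  have := Int.le_of_dvd one_pos h1
  omega

lemma nm11 (hs : 3 ≤ s) : ((1:ℤ), (1:ℤ)) ∉ torusLattice r s t := by
  intro h
  have h1 : s ∣ 1 := by simpa using lat_snd h
  have := Int.le_of_dvd one_pos h1
  omega

lemma mem_gen1 : ((r:ℤ), (0:ℤ)) ∈ torusLattice r s t :=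
  AddSubgroup.subset_closure (Set.mem_insert _ _)

lemma mem_gen2 : ((-t:ℤ), (s:ℤ)) ∈ torusLattice r s t :=
  AddSubgroup.subset_closure (Set.mem_insert_of_mem _ rfl)

lemma tmk_eq_of {p q : ℤ × ℤ} (h : p - q ∈ torusLattice r s t) :
    tmk r s t p = tmk r s t q := by
  have : tmk r s t (p - q) = 0 := (QuotientAddGroup.eq_zero_iff _).2 h
  rw [map_sub] at this
  exact sub_eq_zero.1 this

lemma tmk_ne_of {p d : ℤ × ℤ} (h : d ∉ torusLattice r s t) :
    tmk r s t p ≠ tmk r s t (p + d) := by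
  intro he
  apply h
  have : tmk r s t ((p + d) - p) = 0 := by rw [map_sub, ← he, sub_self]
  have h2 := (QuotientAddGroup.eq_zero_iff _).1 this
  simpa using h2

lemma adjT (p d : ℤ × ℤ) (hd : d ∈ hexDirs) (hdn : d ∉ torusLattice r s t) :
    (TriT r s t).Adj (tmk r s t p) (tmk r s t (p + d)) :=
  show tmk r s t p ≠ tmk r s t (p + d) ∧ ∃ d' ∈ hexDirs, tmk r s t (p + d) - tmk r s t p = tmk r s t d' from
  ⟨tmk_ne_of hdn, d, hd, by rw [← map_sub]; congr 1; ring⟩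

end lat

section sums
variable {M : Type*} [AddCommGroup M]

lemma tele (g : ℕ → M) (n : ℕ) :
    ∑ i ∈ Finset.range n, g (i + 1) = (∑ i ∈ Finset.range n, g i) + g n - g 0 := by
  rw [eq_sub_iff_add_eq]
  exact (Finset.sum_range_succ' g n).symm.trans (Finset.sum_range_succ g n)

lemma sum_shift (n : ℕ) (g : ℤ → M) (hg : ∀ x : ℤ, g (x + n) = g x) (k : ℤ) :
    ∑ i ∈ Finset.range n, g (↑i + k) = ∑ i ∈ Finset.range n, g ↑i := by
  have step : ∀ m : ℤ, ∑ i ∈ Finset.range n, g (↑i + (m + 1)) = ∑ i ∈ Finset.range n, g (↑i + m) := by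
    intro m
    have h1 : ∀ i : ℕ, g (↑i + (m + 1)) = (fun j : ℕ => g (↑j + m)) (i + 1) := by
      intro i; simp only []; congr 1; push_cast; ring
    calc ∑ i ∈ Finset.range n, g (↑i + (m + 1))
        = ∑ i ∈ Finset.range n, (fun j : ℕ => g (↑j + m)) (i + 1) :=
          Finset.sum_congr rfl fun i _ => h1 i
      _ = (∑ i ∈ Finset.range n, g (↑i + m)) + g (↑n + m) - g (↑(0:ℕ) + m) :=
          tele (fun j : ℕ => g (↑j + m)) n
      _ = ∑ i ∈ Finset.range n, g (↑i + m) := by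
          rw [show (↑n + m : ℤ) = m + ↑n by ring, hg m]
          simp
  induction k using Int.induction_on with
  | zero => simp
  | succ k ih => rw [step ↑k, ih]
  | pred k ih =>
      have := step (-(k:ℤ) - 1)
      rw [show (-(k:ℤ) - 1) + 1 = -(k:ℤ) by ring] at this
      exact this.symm.trans ih
end sums

section main
variable (r s t : ℤ) (c : TorusV r s t → Fin 3) (f : TorusV r s t → Fin 4)

/-- The weight of the horizontal edge leaving `v`. -/
def Af (v : TorusV r s t) : ZMod 6 :=
  Gf (c v, f v) (c (v + tmk r s t (1,0)), f (v + tmk r s t (1,0)))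

/-- The weight of the vertical edge leaving `v`. -/
def Bf (v : TorusV r s t) : ZMod 6 :=
  Gf (c v, f v) (c (v + tmk r s t (0,1)), f (v + tmk r s t (0,1)))

lemma cell (hr : 3 ≤ r) (hs : 3 ≤ s) (hc : IsProperColoring (TriT r s t) c)
    (hf : IsProperColoring (TriT r s t) f) (x y : ℤ) :
    ((faceSign (f (tmk r s t (x, y))) (f (tmk r s t (x+1, y+1))) (f (tmk r s t (x, y+1))) : ℤ) : ZMod 6)
      + ((faceSign (f (tmk r s t (x, y))) (f (tmk r s t (x+1, y))) (f (tmk r s t (x+1, y+1))) : ℤ) : ZMod 6)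
    = Af r s t c f (tmk r s t (x, y)) - Af r s t c f (tmk r s t (x, y+1))
      + Bf r s t c f (tmk r s t (x+1, y)) - Bf r s t c f (tmk r s t (x, y)) := by
  have E1 : ∀ a b : ℤ, (a, b) + ((1:ℤ), (0:ℤ)) = (a+1, b) := by
    intro a b; rw [Prod.mk_add_mk]; norm_num
  have E2 : ∀ a b : ℤ, (a, b) + ((0:ℤ), (1:ℤ)) = (a, b+1) := by
    intro a b; rw [Prod.mk_add_mk]; norm_num
  have E3 : ∀ a b : ℤ, (a, b) + ((1:ℤ), (1:ℤ)) = (a+1, b+1) := by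
    intro a b; rw [Prod.mk_add_mk]
  have h10 := nm10 (t := t) hr hs
  have h01 := nm01 (r := r) (t := t) hs
  have h11 := nm11 (r := r) (t := t) hs
  have Avv11 : (TriT r s t).Adj (tmk r s t (x, y)) (tmk r s t (x+1, y+1)) := by
    have := adjT (x, y) ((1:ℤ),(1:ℤ)) (by decide) h11; rwa [E3] at this
  have Avv01 : (TriT r s t).Adj (tmk r s t (x, y)) (tmk r s t (x, y+1)) := by
    have := adjT (x, y) ((0:ℤ),(1:ℤ)) (by decide) h01; rwa [E2] at this
  have Avv10 : (TriT r s t).Adj (tmk r s t (x, y)) (tmk r s t (x+1, y)) := by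
    have := adjT (x, y) ((1:ℤ),(0:ℤ)) (by decide) h10; rwa [E1] at this
  have A0111 : (TriT r s t).Adj (tmk r s t (x, y+1)) (tmk r s t (x+1, y+1)) := by
    have := adjT (x, y+1) ((1:ℤ),(0:ℤ)) (by decide) h10; rwa [E1] at this
  have A1011 : (TriT r s t).Adj (tmk r s t (x+1, y)) (tmk r s t (x+1, y+1)) := by
    have := adjT (x+1, y) ((0:ℤ),(1:ℤ)) (by decide) h01; rwa [E2] at this
  rw [Gface (c (tmk r s t (x, y))) (c (tmk r s t (x+1, y+1))) (c (tmk r s t (x, y+1)))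
        (f (tmk r s t (x, y))) (f (tmk r s t (x+1, y+1))) (f (tmk r s t (x, y+1)))
        (hc Avv11) (Ne.symm (hc A0111)) (hc Avv01)
        (hf Avv11) (Ne.symm (hf A0111)) (hf Avv01),
      Gface (c (tmk r s t (x, y))) (c (tmk r s t (x+1, y))) (c (tmk r s t (x+1, y+1)))
        (f (tmk r s t (x, y))) (f (tmk r s t (x+1, y))) (f (tmk r s t (x+1, y+1)))
        (hc Avv10) (hc A1011) (hc Avv11)
        (hf Avv10) (hf A1011) (hf Avv11)]
  rw [Gskew (c (tmk r s t (x+1, y+1)), f (tmk r s t (x+1, y+1))) (c (tmk r s t (x, y+1)), f (tmk r s t (x, y+1))),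
      Gskew (c (tmk r s t (x, y+1)), f (tmk r s t (x, y+1))) (c (tmk r s t (x, y)), f (tmk r s t (x, y))),
      Gskew (c (tmk r s t (x+1, y+1)), f (tmk r s t (x+1, y+1))) (c (tmk r s t (x, y)), f (tmk r s t (x, y)))]
  have T1 : tmk r s t (x, y) + tmk r s t (1,0) = tmk r s t (x+1, y) := by
    rw [← map_add, E1]
  have T1' : tmk r s t (x, y+1) + tmk r s t (1,0) = tmk r s t (x+1, y+1) := by
    rw [← map_add, E1]
  have T2 : tmk r s t (x, y) + tmk r s t (0,1) = tmk r s t (x, y+1) := by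
    rw [← map_add, E2]
  have T2' : tmk r s t (x+1, y) + tmk r s t (0,1) = tmk r s t (x+1, y+1) := by
    rw [← map_add, E2]
  simp only [Af, Bf, T1, T1', T2, T2']
  abel

end main

/-- If T(r,s,t) admits a proper 3-coloring, then every proper 4-coloring `f`
of T(r,s,t) satisfies `deg(f) ≡ 0 (mod 6)`. -/
theorem deg_dvd_six (r s t : ℤ) (hr : 3 ≤ r) (hs : 3 ≤ s)
    (h3 : ∃ c : TorusV r s t → Fin 3, IsProperColoring (TriT r s t) c)
    (f : TorusV r s t → Fin 4) (hf : IsProperColoring (TriT r s t) f) :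
    (6 : ℤ) ∣ degT r s t f := by
  obtain ⟨c, hc⟩ := h3
  set R := r.toNat with hRdef
  set S := s.toNat with hSdef
  have hR : ((R : ℕ) : ℤ) = r := Int.toNat_of_nonneg (by omega)
  have hS : ((S : ℕ) : ℤ) = s := Int.toNat_of_nonneg (by omega)
  have hcast := (ZMod.intCast_zmod_eq_zero_iff_dvd (degT r s t f) 6)
  rw [show ((6:ℕ):ℤ) = 6 by norm_num] at hcast
  rw [← hcast]
  unfold degT
  push_cast
  rw [Finset.sum_congr rfl (fun (i : ℕ) _ => Finset.sum_congr rfl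
    (fun (j : ℕ) _ => cell r s t c f hr hs hc hf (i : ℤ) (j : ℤ)))]
  simp only [Finset.sum_add_distrib, Finset.sum_sub_distrib]
  have hA : (∑ i ∈ Finset.range R, ∑ j ∈ Finset.range S, Af r s t c f (tmk r s t ((i:ℤ), (j:ℤ)+1)))
      = ∑ i ∈ Finset.range R, ∑ j ∈ Finset.range S, Af r s t c f (tmk r s t ((i:ℤ), (j:ℤ))) := by
    have inner : ∀ i : ℕ,
        (∑ j ∈ Finset.range S, Af r s t c f (tmk r s t ((i:ℤ), (j:ℤ)+1)))
        = (∑ j ∈ Finset.range S, Af r s t c f (tmk r s t ((i:ℤ), (j:ℤ))))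
          + Af r s t c f (tmk r s t ((i:ℤ) + t, 0)) - Af r s t c f (tmk r s t ((i:ℤ), 0)) := by
      intro i
      have h1 : ∀ j : ℕ, Af r s t c f (tmk r s t ((i:ℤ), (j:ℤ)+1))
          = (fun j : ℕ => Af r s t c f (tmk r s t ((i:ℤ), (j:ℤ)))) (j + 1) := by
        intro j
        have hj : ((j:ℤ)+1) = (((j+1 : ℕ)) : ℤ) := by push_cast; ring
        simp only []
        rw [hj]
      calc (∑ j ∈ Finset.range S, Af r s t c f (tmk r s t ((i:ℤ), (j:ℤ)+1)))
          = ∑ j ∈ Finset.range S,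
              (fun j : ℕ => Af r s t c f (tmk r s t ((i:ℤ), (j:ℤ)))) (j + 1) :=
            Finset.sum_congr rfl fun j _ => h1 j
        _ = (∑ j ∈ Finset.range S, Af r s t c f (tmk r s t ((i:ℤ), (j:ℤ))))
              + Af r s t c f (tmk r s t ((i:ℤ), ((S:ℕ):ℤ))) - Af r s t c f (tmk r s t ((i:ℤ), ((0:ℕ):ℤ))) :=
            tele (fun j : ℕ => Af r s t c f (tmk r s t ((i:ℤ), (j:ℤ)))) S
        _ = (∑ j ∈ Finset.range S, Af r s t c f (tmk r s t ((i:ℤ), (j:ℤ))))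
              + Af r s t c f (tmk r s t ((i:ℤ) + t, 0)) - Af r s t c f (tmk r s t ((i:ℤ), 0)) := by
            rw [hS, Nat.cast_zero]
            have e1 : Af r s t c f (tmk r s t ((i:ℤ), s)) = Af r s t c f (tmk r s t ((i:ℤ) + t, 0)) := by
              apply congrArg
              apply tmk_eq_of
              rw [Prod.mk_sub_mk]
              rw [show ((i:ℤ) - ((i:ℤ) + t)) = -t by ring, sub_zero]
              exact mem_gen2
            rw [e1]
    rw [Finset.sum_congr rfl (fun (i : ℕ) _ => inner i)]
    simp only [Finset.sum_add_distrib, Finset.sum_sub_distrib]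
    have hper : ∀ x : ℤ, Af r s t c f (tmk r s t (x + (R:ℤ), 0)) = Af r s t c f (tmk r s t (x, 0)) := by
      intro x
      apply congrArg
      apply tmk_eq_of
      rw [Prod.mk_sub_mk, show (x + (R:ℤ) - x) = (R:ℤ) by ring, sub_zero, hR]
      exact mem_gen1
    have hsh := sum_shift R (fun x => Af r s t c f (tmk r s t (x, 0))) hper t
    rw [hsh]
    abel
  have hB : (∑ i ∈ Finset.range R, ∑ j ∈ Finset.range S, Bf r s t c f (tmk r s t ((i:ℤ)+1, (j:ℤ))))
      = ∑ i ∈ Finset.range R, ∑ j ∈ Finset.range S, Bf r s t c f (tmk r s t ((i:ℤ), (j:ℤ))) := by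
    rw [Finset.sum_comm]
    rw [show (∑ i ∈ Finset.range R, ∑ j ∈ Finset.range S, Bf r s t c f (tmk r s t ((i:ℤ), (j:ℤ))))
        = ∑ j ∈ Finset.range S, ∑ i ∈ Finset.range R, Bf r s t c f (tmk r s t ((i:ℤ), (j:ℤ))) from
      Finset.sum_comm]
    refine Finset.sum_congr rfl fun j _ => ?_
    have hper : ∀ x : ℤ, Bf r s t c f (tmk r s t (x + (R:ℤ), (j:ℤ))) = Bf r s t c f (tmk r s t (x, (j:ℤ))) := by
      intro x
      apply congrArg
      apply tmk_eq_of
      rw [Prod.mk_sub_mk, show (x + (R:ℤ) - x) = (R:ℤ) by ring, sub_self, hR]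
      exact mem_gen1
    exact sum_shift R (fun x => Bf r s t c f (tmk r s t (x, (j:ℤ)))) hper 1
  rw [hA, hB]
  abel
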